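/- arXiv:1609.02456 — 10 statements merged into one kernel-verified Lean document; each statement's English description precedes it below -/
import Mathlib

section
/- Suppose that for every i ∈ {1,…,N} the local matrix Qi = Fiᵀ·Pi + Pi·Fi is negative semidefinite, where each Pi is structured positive definite with ηi = σ̄·Cti for the common constant σ̄ > 0. Then the global closed-loop matrix inequality holds: 𝐅ᵀ·𝐏 + 𝐏·𝐅 is negative semidefinite. -/
open Matrix

/-- The 3×3 matrix with `(1,1)` entry equal to `1` and all other entries zero. -/
noncomputable def E11 : Matrix (Fin 3) (Fin 3) ℝ := !![1, 0, 0; 0, 0, 0; 0, 0, 0]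

lemma quad2 {n : Type*} [Fintype n] (M P : Matrix n n ℝ) (hP : Pᵀ = P) (x : n → ℝ) :
    x ⬝ᵥ (Mᵀ * P + P * M).mulVec x = 2 * (P.mulVec x ⬝ᵥ M.mulVec x) := by
  have hxP : P.vecMul x = P.mulVec x := by rw [← hP, vecMul_transpose, hP]
  rw [add_mulVec, dotProduct_add, ← mulVec_mulVec, ← mulVec_mulVec,
    dotProduct_mulVec x Mᵀ, vecMul_transpose, dotProduct_mulVec x P, hxP,
    dotProduct_comm (M.mulVec x)]
  ring

lemma E11_apply (k m : Fin 3) : E11 k m = if k = 0 then (if m = 0 then 1 else 0) else 0 := by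
  fin_cases k <;> fin_cases m <;> rfl

lemma E11_mulVec (w : Fin 3 → ℝ) (k : Fin 3) :
    E11.mulVec w k = if k = 0 then w 0 else 0 := by
  simp only [Matrix.mulVec, dotProduct, E11_apply]
  by_cases hk : k = 0
  · simp [hk, Fin.sum_univ_three]
  · simp [hk]

/-- If each local matrix `Qᵢ = Fᵢᵀ·Pᵢ + Pᵢ·Fᵢ` is negative semidefinite, with the
structured positive definite matrices `Pᵢ` satisfying `ηᵢ = σ̄·Ctᵢ` for a common
constant `σ̄ > 0`, then the global closed-loop matrix inequality
`𝐅ᵀ·𝐏 + 𝐏·𝐅 ≤ 0` holds. -/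
theorem global_lyapunov_negSemidef
    (N : ℕ) (hN : 1 ≤ N)
    (Rt Lt Ct k1 k2 k3 : Fin N → ℝ)
    (hRt : ∀ i, 0 < Rt i) (hLt : ∀ i, 0 < Lt i) (hCt : ∀ i, 0 < Ct i)
    (F : Fin N → Matrix (Fin 3) (Fin 3) ℝ)
    (hF : ∀ i, F i = !![0, 1/Ct i, 0;
                        (k1 i - 1)/Lt i, (k2 i - Rt i)/Lt i, k3 i/Lt i;
                        -1, 0, 0])
    (a : Fin N → Fin N → ℝ)
    (ha_symm : ∀ i j, a i j = a j i)
    (ha_nonneg : ∀ i j, 0 ≤ a i j)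
    (ha_diag : ∀ i, a i i = 0)
    (σ : ℝ) (hσ : 0 < σ)
    (η p22 p23 p33 : Fin N → ℝ)
    (hη : ∀ i, η i = σ * Ct i)
    (P : Fin N → Matrix (Fin 3) (Fin 3) ℝ)
    (hP : ∀ i, P i = !![η i, 0, 0; 0, p22 i, p23 i; 0, p23 i, p33 i])
    (hPpd : ∀ i, (P i).PosDef)
    (hQ : ∀ i, ∀ v : Fin 3 → ℝ, v ⬝ᵥ ((F i)ᵀ * P i + P i * F i).mulVec v ≤ 0)
    (bigF bigP : Matrix (Fin N × Fin 3) (Fin N × Fin 3) ℝ)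
    (hbigF : ∀ p q : Fin N × Fin 3, bigF p q =
      if p.1 = q.1 then (F p.1 - (∑ l, a p.1 l / Ct p.1) • E11) p.2 q.2
      else ((a p.1 q.1 / Ct p.1) • E11) p.2 q.2)
    (hbigP : ∀ p q : Fin N × Fin 3, bigP p q =
      if p.1 = q.1 then P p.1 p.2 q.2 else 0) :
    ∀ x : (Fin N × Fin 3) → ℝ, x ⬝ᵥ (bigFᵀ * bigP + bigP * bigF).mulVec x ≤ 0 := by
  intro x
  have hPsymm : ∀ i, (P i)ᵀ = P i := by
    intro i
    rw [hP]
    ext k m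
    fin_cases k <;> fin_cases m <;> rfl
  have hbigPsymm : bigPᵀ = bigP := by
    ext p q
    rw [transpose_apply, hbigP, hbigP]
    by_cases h : p.1 = q.1
    · rw [if_pos h, if_pos h.symm, h]
      exact (congrFun (congrFun (hPsymm q.1) q.2) p.2).symm
    · rw [if_neg h, if_neg (Ne.symm h)]
  have hPx : ∀ p : Fin N × Fin 3, bigP.mulVec x p
      = (P p.1).mulVec (fun m => x (p.1, m)) p.2 := by
    rintro ⟨i, k⟩
    simp only [Matrix.mulVec, dotProduct, Fintype.sum_prod_type, hbigP]
    rw [Finset.sum_eq_single i]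
    · simp
    · intro j _ hji; simp [Ne.symm hji]
    · simp
  have hFx : ∀ p : Fin N × Fin 3, bigF.mulVec x p
      = (F p.1).mulVec (fun m => x (p.1, m)) p.2 +
        (if p.2 = 0 then ∑ j, a p.1 j / Ct p.1 * (x (j, 0) - x (p.1, 0)) else 0) := by
    rintro ⟨i, k⟩
    have hL : bigF.mulVec x (i, k) = ∑ j, ∑ m, bigF (i, k) (j, m) * x (j, m) := by
      simp [Matrix.mulVec, dotProduct, Fintype.sum_prod_type]
    rw [hL]
    simp only [hbigF]
    rw [← Finset.add_sum_erase _ _ (Finset.mem_univ i)]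
    have h1 : (∑ m, (if i = i then (F i - (∑ l, a i l / Ct i) • E11) k m
        else ((a i i / Ct i) • E11) k m) * x (i, m))
        = (F i).mulVec (fun m => x (i, m)) k
          - (∑ l, a i l / Ct i) * E11.mulVec (fun m => x (i, m)) k := by
      simp only [Matrix.mulVec, dotProduct, Finset.mul_sum, ← Finset.sum_sub_distrib]
      refine Finset.sum_congr rfl fun m _ => ?_
      simp only [eq_self_iff_true, if_true]
      simp only [Matrix.sub_apply, Matrix.smul_apply, smul_eq_mul]
      ring
    have h2 : (∑ j ∈ Finset.univ.erase i, ∑ m,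
          (if i = j then (F i - (∑ l, a i l / Ct i) • E11) k m
           else ((a i j / Ct i) • E11) k m) * x (j, m))
        = ∑ j, (a i j / Ct i) * E11.mulVec (fun m => x (j, m)) k := by
      have e1 : ∀ j ∈ Finset.univ.erase i, (∑ m,
          (if i = j then (F i - (∑ l, a i l / Ct i) • E11) k m
           else ((a i j / Ct i) • E11) k m) * x (j, m))
          = (a i j / Ct i) * E11.mulVec (fun m => x (j, m)) k := by
        intro j hj
        have hji : i ≠ j := fun h => (Finset.mem_erase.mp hj).1 h.symm
        simp only [if_neg hji, Matrix.smul_apply, smul_eq_mul, Matrix.mulVec, dotProduct,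
          Finset.mul_sum]
        exact Finset.sum_congr rfl fun m _ => by ring
      rw [Finset.sum_congr rfl e1]
      exact Finset.sum_erase _ (by simp [ha_diag])
    rw [h1, h2]
    by_cases hk : k = 0
    · subst hk
      rw [show (∑ j, a i j / Ct i * (x (j, 0) - x (i, 0)))
          = (∑ j, a i j / Ct i * x (j, 0)) - (∑ j, a i j / Ct i) * x (i, 0) by
        rw [Finset.sum_mul, ← Finset.sum_sub_distrib]
        exact Finset.sum_congr rfl fun j _ => by ring]
      simp only [E11_mulVec, reduceIte]
      ring
    · simp [hk, E11_mulVec]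
  have hPv0 : ∀ i, (P i).mulVec (fun m => x (i, m)) 0 = σ * Ct i * x (i, 0) := by
    intro i
    simp [hP, hη, Matrix.mulVec, dotProduct, Fin.sum_univ_three]
  have key : bigP.mulVec x ⬝ᵥ bigF.mulVec x =
      (∑ i, (P i).mulVec (fun m => x (i, m)) ⬝ᵥ (F i).mulVec (fun m => x (i, m)))
      + σ * ∑ i, ∑ j, a i j * (x (i, 0) * (x (j, 0) - x (i, 0))) := by
    rw [dotProduct, Fintype.sum_prod_type]
    have hterm : ∀ i, (∑ k, bigP.mulVec x (i, k) * bigF.mulVec x (i, k))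
        = (P i).mulVec (fun m => x (i, m)) ⬝ᵥ (F i).mulVec (fun m => x (i, m))
          + σ * ∑ j, a i j * (x (i, 0) * (x (j, 0) - x (i, 0))) := by
      intro i
      simp only [hPx, hFx]
      rw [Fin.sum_univ_three]
      rw [if_pos (rfl : (0 : Fin 3) = 0), if_neg (by decide : ¬(1 : Fin 3) = 0),
        if_neg (by decide : ¬(2 : Fin 3) = 0)]
      rw [dotProduct, Fin.sum_univ_three, hPv0]
      have hc : σ * Ct i * x (i, 0) * (∑ j, a i j / Ct i * (x (j, 0) - x (i, 0)))
          = σ * ∑ j, a i j * (x (i, 0) * (x (j, 0) - x (i, 0))) := by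
        rw [Finset.mul_sum, Finset.mul_sum]
        refine Finset.sum_congr rfl fun j _ => ?_
        have h0 : Ct i ≠ 0 := (hCt i).ne'
        field_simp
      rw [mul_add, hc]
      ring
    calc (∑ i, ∑ k, bigP.mulVec x (i, k) * bigF.mulVec x (i, k))
        = ∑ i, ((P i).mulVec (fun m => x (i, m)) ⬝ᵥ (F i).mulVec (fun m => x (i, m))
          + σ * ∑ j, a i j * (x (i, 0) * (x (j, 0) - x (i, 0)))) :=
          Finset.sum_congr rfl fun i _ => hterm i
      _ = _ := by rw [Finset.sum_add_distrib, ← Finset.mul_sum]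
  have hloc : ∀ i, (P i).mulVec (fun m => x (i, m)) ⬝ᵥ (F i).mulVec (fun m => x (i, m)) ≤ 0 := by
    intro i
    have h := hQ i (fun m => x (i, m))
    rw [quad2 (F i) (P i) (hPsymm i)] at h
    linarith
  set y : Fin N → ℝ := fun i => x (i, 0) with hy
  have hS : (∑ i, ∑ j, a i j * (y i * (y j - y i))) ≤ 0 := by
    set S := ∑ i, ∑ j, a i j * (y i * (y j - y i)) with hSdef
    have hswap : S = ∑ i, ∑ j, a i j * (y j * (y i - y j)) := by
      rw [hSdef, Finset.sum_comm]
      exact Finset.sum_congr rfl fun i _ => Finset.sum_congr rfl fun j _ => by rw [ha_symm]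
    have h2 : 2 * S = ∑ i, ∑ j, -(a i j * (y i - y j) ^ 2) := by
      rw [two_mul]
      nth_rewrite 2 [hswap]
      rw [hSdef, ← Finset.sum_add_distrib]
      refine Finset.sum_congr rfl fun i _ => ?_
      rw [← Finset.sum_add_distrib]
      exact Finset.sum_congr rfl fun j _ => by ring
    have h3 : (∑ i, ∑ j, -(a i j * (y i - y j) ^ 2)) ≤ 0 := by
      refine Finset.sum_nonpos fun i _ => Finset.sum_nonpos fun j _ => ?_
      simp only [neg_nonpos]
      exact mul_nonneg (ha_nonneg i j) (sq_nonneg _)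
    linarith [h2 ▸ h3]
  rw [quad2 bigF bigP hbigPsymm x, key]
  have hA : (∑ i, (P i).mulVec (fun m => x (i, m)) ⬝ᵥ (F i).mulVec (fun m => x (i, m))) ≤ 0 :=
    Finset.sum_nonpos fun i _ => hloc i
  nlinarith [mul_nonpos_of_nonneg_of_nonpos hσ.le hS]
end

section
/- Assume Q is negative semidefinite and k3 ≠ 0. Then for every vector v ∈ ℝ², one has vᵀ·Q22·v = 0 if and only if v lies in the kernel of 𝓕22, i.e. 𝓕22·v = 0. -/
open Matrix

/-- If `Q = Fᵀ·P + P·F` is negative semidefinite and `k3 ≠ 0`, then, for every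
`v ∈ ℝ²`, `vᵀ·Q22·v = 0` if and only if `v ∈ Ker(𝓕22)`. -/
theorem quadratic_zero_iff_ker_F22
    (Rt Lt Ct : ℝ) (hRt : 0 < Rt) (hLt : 0 < Lt) (hCt : 0 < Ct)
    (k1 k2 k3 : ℝ) (η p22 p23 p33 : ℝ) (hη : 0 < η)
    (F P : Matrix (Fin 3) (Fin 3) ℝ)
    (hF : F = !![0, 1/Ct, 0; (k1 - 1)/Lt, (k2 - Rt)/Lt, k3/Lt; -1, 0, 0])
    (hP : P = !![η, 0, 0; 0, p22, p23; 0, p23, p33])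
    (hPpd : P.PosDef)
    (Q : Matrix (Fin 3) (Fin 3) ℝ) (hQ : Q = Fᵀ * P + P * F)
    (F22 P22 Q22 : Matrix (Fin 2) (Fin 2) ℝ)
    (hF22 : F22 = !![(k2 - Rt)/Lt, k3/Lt; 0, 0])
    (hP22 : P22 = !![p22, p23; p23, p33])
    (hQ22 : Q22 = F22ᵀ * P22 + P22 * F22)
    (hns : ∀ x : Fin 3 → ℝ, x ⬝ᵥ Q.mulVec x ≤ 0)
    (hk3 : k3 ≠ 0) :
    ∀ v : Fin 2 → ℝ, v ⬝ᵥ Q22.mulVec v = 0 ↔ F22.mulVec v = 0 := by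
  set A : ℝ := (k2 - Rt)/Lt with hA
  set B : ℝ := k3/Lt with hB
  -- p22 > 0
  have hp22 : 0 < p22 := by
    have := hPpd.dotProduct_mulVec_pos (x := (![0, 1, 0] : Fin 3 → ℝ)) (by
      intro hzero
      have := congrFun hzero 1
      simp at this)
    rw [hP] at this
    simpa [Matrix.mulVec, dotProduct, Fin.sum_univ_three] using this
  subst hF hP hQ hF22 hP22 hQ22
  -- transposes as literals
  have ht2 : (!![A, B; 0, 0] : Matrix (Fin 2) (Fin 2) ℝ)ᵀ = !![A, 0; B, 0] := by
    ext i j; fin_cases i <;> fin_cases j <;> rfl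
  have ht3 : (!![0, 1/Ct, 0; (k1 - 1)/Lt, A, B; -1, 0, 0] :
      Matrix (Fin 3) (Fin 3) ℝ)ᵀ = !![0, (k1-1)/Lt, -1; 1/Ct, A, 0; 0, B, 0] := by
    ext i j; fin_cases i <;> fin_cases j <;> rfl
  -- Q22 as a literal matrix
  have hMlit : (!![A, B; 0, 0] : Matrix (Fin 2) (Fin 2) ℝ)ᵀ * !![p22, p23; p23, p33] +
      !![p22, p23; p23, p33] * !![A, B; 0, 0] =
      !![2*A*p22, A*p23 + B*p22; A*p23 + B*p22, 2*B*p23] := by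
    rw [ht2]
    ext i j
    fin_cases i <;> fin_cases j <;>
      (simp [Matrix.mul_apply, Fin.sum_univ_two]; ring)
  -- the Q22 quadratic form, explicitly
  have hquad : ∀ x : Fin 2 → ℝ,
      x ⬝ᵥ (!![2*A*p22, A*p23 + B*p22; A*p23 + B*p22, 2*B*p23]).mulVec x
        = 2*A*p22*(x 0)^2 + 2*(A*p23 + B*p22)*(x 0)*(x 1) + 2*B*p23*(x 1)^2 := by
    intro x
    simp [Matrix.mulVec, dotProduct, Fin.sum_univ_two]
    ring
  -- the Q22 quadratic is ≤ 0 via embedding into Q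
  have hns22 : ∀ x : Fin 2 → ℝ,
      x ⬝ᵥ (!![2*A*p22, A*p23 + B*p22; A*p23 + B*p22, 2*B*p23]).mulVec x ≤ 0 := by
    intro x
    have h3 := hns ![0, x 0, x 1]
    rw [ht3] at h3
    rw [hquad x]
    calc 2*A*p22*(x 0)^2 + 2*(A*p23 + B*p22)*(x 0)*(x 1) + 2*B*p23*(x 1)^2
        = ![0, x 0, x 1] ⬝ᵥ
          ((!![0, (k1-1)/Lt, -1; 1/Ct, A, 0; 0, B, 0] * !![η, 0, 0; 0, p22, p23; 0, p23, p33] +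
            !![η, 0, 0; 0, p22, p23; 0, p23, p33] *
              !![0, 1/Ct, 0; (k1 - 1)/Lt, A, B; -1, 0, 0])).mulVec ![0, x 0, x 1] := by
          simp [Matrix.mulVec, Matrix.mul_apply, dotProduct, Fin.sum_univ_three]
          ring
      _ ≤ 0 := h3
  intro v
  rw [hMlit]
  constructor
  · intro h
    -- -Q22 is positive semidefinite
    have hpsd : (-(!![2*A*p22, A*p23 + B*p22; A*p23 + B*p22, 2*B*p23] :
        Matrix (Fin 2) (Fin 2) ℝ)).PosSemidef := by
      refine PosSemidef.of_dotProduct_mulVec_nonneg ?_ ?_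
      · show _ᴴ = _
        ext i j
        fin_cases i <;> fin_cases j <;> simp
      · intro x
        have := neg_nonneg.mpr (hns22 x)
        simp only [star_trivial, Matrix.neg_mulVec, dotProduct_neg]
        exact this
    have hMv : (!![2*A*p22, A*p23 + B*p22; A*p23 + B*p22, 2*B*p23] :
        Matrix (Fin 2) (Fin 2) ℝ).mulVec v = 0 := by
      have h0 : star v ⬝ᵥ (-(!![2*A*p22, A*p23 + B*p22; A*p23 + B*p22, 2*B*p23] :
          Matrix (Fin 2) (Fin 2) ℝ)) *ᵥ v = 0 := by
        simp only [star_trivial, Matrix.neg_mulVec, dotProduct_neg]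
        rw [h]; ring
      have := (hpsd.dotProduct_mulVec_zero_iff v).mp h0
      rw [Matrix.neg_mulVec, neg_eq_zero] at this
      exact this
    have hE1 := congrFun hMv 0
    rw [hquad v] at h
    simp [Matrix.mulVec, dotProduct, Fin.sum_univ_two] at hE1
    have key : A * v 0 + B * v 1 = 0 := by
      have hsq : p22 * (A * v 0 + B * v 1)^2 = 0 := by
        linear_combination (A * v 0 + B * v 1) * hE1 - (A/2) * h
      have := mul_eq_zero.mp hsq
      rcases this with h' | h'
      · exact absurd h' (ne_of_gt hp22)
      · exact pow_eq_zero_iff (n := 2) (by norm_num) |>.mp h'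
    funext i
    fin_cases i <;>
      simp [Matrix.mulVec, dotProduct, Fin.sum_univ_two]
    linarith [key]
  · intro h
    have h0 := congrFun h 0
    simp [Matrix.mulVec, dotProduct, Fin.sum_univ_two] at h0
    rw [hquad v]
    linear_combination (2 * (p22 * v 0 + p23 * v 1)) * h0
end

section
/- Assume Q22 is negative semidefinite, k3 ≠ 0, and P22 is symmetric positive definite. Then k2 ≠ Rt (equivalently, the (1,1) entry (k2−Rt)/Lt of 𝓕22 is nonzero). -/
open Matrix

/-- If `Q22 = 𝓕22ᵀ·P22 + P22·𝓕22` is negative semidefinite with `P22` symmetric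
positive definite and `k3 ≠ 0`, then `k2 ≠ Rt`. -/
theorem k2_ne_Rt
    (Rt Lt Ct : ℝ) (hRt : 0 < Rt) (hLt : 0 < Lt) (hCt : 0 < Ct)
    (k1 k2 k3 : ℝ) (p22 p23 p33 : ℝ)
    (F22 P22 Q22 : Matrix (Fin 2) (Fin 2) ℝ)
    (hF22 : F22 = !![(k2 - Rt)/Lt, k3/Lt; 0, 0])
    (hP22 : P22 = !![p22, p23; p23, p33])
    (hP22pd : P22.PosDef)
    (hQ22 : Q22 = F22ᵀ * P22 + P22 * F22)
    (hns : ∀ x : Fin 2 → ℝ, x ⬝ᵥ Q22.mulVec x ≤ 0)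
    (hk3 : k3 ≠ 0) :
    k2 ≠ Rt := by
  intro h
  have hp22 : 0 < p22 := by
    have := hP22pd.dotProduct_mulVec_pos (x := ![1, 0]) (by
      intro hx
      have := congrFun hx 0
      simp at this)
    simp [hP22, Matrix.mulVec, dotProduct, Fin.sum_univ_two] at this
    linarith
  set c : ℝ := p22 * k3 / Lt with hc
  set d : ℝ := p23 * k3 / Lt with hd
  have hcne : c ≠ 0 := div_ne_zero (mul_ne_zero hp22.ne' hk3) hLt.ne'
  have key := hns ![(1 - 2*d)/(2*c), 1]
  simp [hQ22, hF22, hP22, h, Matrix.mulVec, dotProduct, Matrix.mul_apply,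
    Fin.sum_univ_two, Matrix.transpose_apply, Matrix.vecHead, Matrix.vecTail] at key
  rw [hc, hd] at key
  have hLt' : Lt ≠ 0 := hLt.ne'
  have hp22' : p22 ≠ 0 := hp22.ne'
  have e : (1 - 2 * (p23 * k3 / Lt)) / (2 * (p22 * k3 / Lt)) * (p22 * (k3 / Lt)) +
      (k3 / Lt * p22 * ((1 - 2 * (p23 * k3 / Lt)) / (2 * (p22 * k3 / Lt))) +
        (k3 / Lt * p23 + p23 * (k3 / Lt))) = 1 := by
    field_simp
    ring
  rw [e] at key
  linarith
end

section
/- Assume Q is negative semidefinite and k3 ≠ 0, and set δ = −(k2−Rt)/k3. Then for a vector w ∈ ℝ³, one has wᵀ·Q·w = 0 if and only if w has the form w = (α, β, δ·β) for some real numbers α and β. -/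
open Matrix

private lemma lin_zero (c d : ℝ) (h : ∀ t : ℝ, c * t + d ≤ 0) : c = 0 := by
  by_contra hc
  have h1 := h ((1 - d) / c)
  have h2 : c * ((1 - d) / c) = 1 - d := by field_simp
  rw [h2] at h1
  linarith

set_option maxHeartbeats 1000000 in
/-- If `Q = Fᵀ·P + P·F` is negative semidefinite and `k3 ≠ 0`, then, with
`δ = −(k2−Rt)/k3`, a vector `w ∈ ℝ³` satisfies `wᵀ·Q·w = 0` if and only if
`w = (α, β, δ·β)` for some reals `α, β`. -/
theorem quadratic_zero_iff_structured
    (Rt Lt Ct : ℝ) (hRt : 0 < Rt) (hLt : 0 < Lt) (hCt : 0 < Ct)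
    (k1 k2 k3 : ℝ) (η p22 p23 p33 : ℝ) (hη : 0 < η)
    (F P : Matrix (Fin 3) (Fin 3) ℝ)
    (hF : F = !![0, 1/Ct, 0; (k1 - 1)/Lt, (k2 - Rt)/Lt, k3/Lt; -1, 0, 0])
    (hP : P = !![η, 0, 0; 0, p22, p23; 0, p23, p33])
    (hPpd : P.PosDef)
    (Q : Matrix (Fin 3) (Fin 3) ℝ) (hQ : Q = Fᵀ * P + P * F)
    (hns : ∀ x : Fin 3 → ℝ, x ⬝ᵥ Q.mulVec x ≤ 0)
    (hk3 : k3 ≠ 0)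
    (δ : ℝ) (hδ : δ = -(k2 - Rt)/k3) :
    ∀ w : Fin 3 → ℝ, w ⬝ᵥ Q.mulVec w = 0 ↔ ∃ α β : ℝ, w = ![α, β, δ * β] := by
  have hLt' : Lt ≠ 0 := ne_of_gt hLt
  set a : ℝ := (k2 - Rt)/Lt with ha_def
  set b : ℝ := k3/Lt with hb_def
  have hb : b ≠ 0 := div_ne_zero hk3 hLt'
  have hab : a = -δ * b := by
    rw [hδ, ha_def, hb_def]; field_simp
  set c1 : ℝ := η/Ct + p22*(k1-1)/Lt - p23 with hc1_def
  set c2 : ℝ := p23*(k1-1)/Lt - p33 with hc2_def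
  -- key expansion of the quadratic form
  have hFt : Fᵀ = !![0, (k1 - 1)/Lt, -1; 1/Ct, a, 0; 0, b, 0] := by
    rw [hF]
    ext i j
    fin_cases i <;> fin_cases j <;> rfl
  have hQ' : Q = !![0, c1, c2; c1, 2*a*p22, b*p22 + a*p23; c2, b*p22 + a*p23, 2*b*p23] := by
    rw [hQ, hFt, hF, hP]
    ext i j
    fin_cases i <;> fin_cases j <;>
      simp [Matrix.mul_apply, Matrix.transpose_apply, Fin.sum_univ_three, hc1_def, hc2_def,
        ha_def, hb_def] <;>
      ring
  have hkey : ∀ x : Fin 3 → ℝ, x ⬝ᵥ Q.mulVec x =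
      2*c1*(x 0)*(x 1) + 2*c2*(x 0)*(x 2) + 2*a*p22*(x 1)^2
        + 2*(b*p22 + a*p23)*(x 1)*(x 2) + 2*b*p23*(x 2)^2 := by
    intro x
    rw [hQ']
    simp [mulVec, dotProduct, Fin.sum_univ_three]
    ring
  -- positivity of p22
  have hp22 : 0 < p22 := by
    have h := hPpd.dotProduct_mulVec_pos (x := ![0,1,0]) (by
      intro h0
      have := congrFun h0 1
      simp at this)
    rw [hP] at h
    simpa [mulVec, dotProduct, Fin.sum_univ_three] using h
  -- c1 = 0
  have hc1 : c1 = 0 := by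
    have h := lin_zero (2*c1) (2*a*p22) (fun t => by
      have := hns ![t,1,0]
      rw [hkey ![t,1,0]] at this
      simpa using this)
    linarith
  -- c2 = 0
  have hc2 : c2 = 0 := by
    have h := lin_zero (2*c2) (2*b*p23) (fun t => by
      have := hns ![t,0,1]
      rw [hkey ![t,0,1]] at this
      simp at this
      linarith)
    linarith
  -- b * p23 ≤ 0
  have hbp23le : 2*b*p23 ≤ 0 := by
    have := hns ![0,0,1]
    rw [hkey ![0,0,1]] at this
    simpa using this
  -- p22 + δ * p23 = 0
  have hc3 : p22 + δ * p23 = 0 := by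
    have h := lin_zero (2*b*(p22 + δ*p23)) (2*b*p23) (fun t => by
      have := hns ![0, t, δ*t+1]
      rw [hkey ![0, t, δ*t+1]] at this
      simp at this
      have heq : 2*a*p22*t^2 + 2*(b*p22 + a*p23)*t*(δ*t+1) + 2*b*p23*(δ*t+1)^2
          = 2*b*(p22+δ*p23)*t + 2*b*p23 := by rw [hab]; ring
      linarith)
    rcases mul_eq_zero.1 h with h' | h'
    · rcases mul_eq_zero.1 h' with h'' | h''
      · norm_num at h''
      · exact absurd h'' hb
    · exact h'
  have hp23 : p23 ≠ 0 := by
    intro h0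
    rw [h0] at hc3
    simp at hc3
    linarith
  have hbp23 : b * p23 < 0 :=
    lt_of_le_of_ne (by linarith) (mul_ne_zero hb hp23)
  -- final reduced form
  have hform : ∀ x : Fin 3 → ℝ, x ⬝ᵥ Q.mulVec x = 2*b*p23*(x 2 - δ * x 1)^2 := by
    intro x
    rw [hkey x, hc1, hc2]
    have hp22' : p22 = -δ * p23 := by linarith
    rw [hab, hp22']
    ring
  intro w
  rw [hform w]
  constructor
  · intro h
    have hsq : (w 2 - δ * w 1)^2 = 0 := by
      rcases mul_eq_zero.1 h with h' | h'
      · nlinarith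
      · exact h'
    have hw2 : w 2 = δ * w 1 := by nlinarith [sq_nonneg (w 2 - δ * w 1), pow_eq_zero_iff (n := 2) (two_ne_zero) |>.1 hsq]
    exact ⟨w 0, w 1, by
      funext i
      fin_cases i <;> simp [hw2]⟩
  · rintro ⟨α, β, rfl⟩
    simp
end

section
/- Assume Q is negative semidefinite and k3 ≠ 0, and set δ = −(k2−Rt)/k3. Then the entries of P satisfy p22 = −δ·p23. -/
open Matrix

set_option maxHeartbeats 1000000 in
/-- If `Q = Fᵀ·P + P·F` is negative semidefinite and `k3 ≠ 0`, then, with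
`δ = −(k2−Rt)/k3`, the entries of the structured matrix `P` satisfy
`p22 = −δ·p23`. -/
theorem p22_eq_neg_delta_p23
    (Rt Lt Ct : ℝ) (hRt : 0 < Rt) (hLt : 0 < Lt) (hCt : 0 < Ct)
    (k1 k2 k3 : ℝ) (η p22 p23 p33 : ℝ) (hη : 0 < η)
    (F P : Matrix (Fin 3) (Fin 3) ℝ)
    (hF : F = !![0, 1/Ct, 0; (k1 - 1)/Lt, (k2 - Rt)/Lt, k3/Lt; -1, 0, 0])
    (hP : P = !![η, 0, 0; 0, p22, p23; 0, p23, p33])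
    (hPpd : P.PosDef)
    (Q : Matrix (Fin 3) (Fin 3) ℝ) (hQ : Q = Fᵀ * P + P * F)
    (hns : ∀ x : Fin 3 → ℝ, x ⬝ᵥ Q.mulVec x ≤ 0)
    (hk3 : k3 ≠ 0)
    (δ : ℝ) (hδ : δ = -(k2 - Rt)/k3) :
    p22 = -δ * p23 := by
  have key : ∀ a b : ℝ,
      2*p22*(k2-Rt)*(a*a) + 2*(p22*k3 + p23*(k2-Rt))*(a*b) + 2*p23*k3*(b*b) ≤ 0 := by
    intro a b
    have h := hns ![0, a, b]
    rw [hQ, hF, hP] at h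
    simp [dotProduct, mulVec, Matrix.mul_apply, Fin.sum_univ_three,
      Matrix.transpose_apply, Matrix.cons_val_zero, Matrix.cons_val_one,
      Matrix.head_cons, Matrix.cons_val_two, Matrix.tail_cons,
      Matrix.vecHead, Matrix.vecTail, Function.comp] at h
    have h2 : 2*p22*(k2-Rt)*(a*a) + 2*(p22*k3 + p23*(k2-Rt))*(a*b) + 2*p23*k3*(b*b)
        = Lt * (a * (((k2 - Rt) / Lt * p22 + p22 * ((k2 - Rt) / Lt)) * a +
            ((k2 - Rt) / Lt * p23 + p22 * (k3 / Lt)) * b) +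
          b * ((k3 / Lt * p22 + p23 * ((k2 - Rt) / Lt)) * a +
            (k3 / Lt * p23 + p23 * (k3 / Lt)) * b)) := by
      field_simp
      ring
    rw [h2]
    exact mul_nonpos_iff.mpr (Or.inl ⟨hLt.le, h⟩)
  -- abstract the quadratic form coefficients
  obtain ⟨A, hAdef⟩ : ∃ A : ℝ, A = 2*p22*(k2-Rt) := ⟨_, rfl⟩
  obtain ⟨B, hBdef⟩ : ∃ B : ℝ, B = p22*k3 + p23*(k2-Rt) := ⟨_, rfl⟩
  obtain ⟨C, hCdef⟩ : ∃ C : ℝ, C = 2*p23*k3 := ⟨_, rfl⟩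
  obtain ⟨s, hsdef⟩ : ∃ s : ℝ, s = p22*k3 - p23*(k2-Rt) := ⟨_, rfl⟩
  have key' : ∀ a b : ℝ, A*(a*a) + 2*B*(a*b) + C*(b*b) ≤ 0 := by
    intro a b
    rw [hAdef, hBdef, hCdef]
    exact key a b
  have hid : B*B - A*C = s*s := by rw [hAdef, hBdef, hCdef, hsdef]; ring
  have hs : s = 0 := by
    by_contra hs0
    have hs2 : 0 < s*s := mul_self_pos.mpr hs0
    have hA := key' 1 0
    have hC := key' 0 1
    have h1 := key' C (-B)
    have h2 := key' B (-A)
    have hCz : C = 0 := by nlinarith [h1, hs2, hid, hC]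
    have hAz : A = 0 := by nlinarith [h2, hs2, hid, hA]
    have h3 := key' 1 1
    have h4 := key' 1 (-1)
    have hB : B = 0 := by nlinarith [h3, h4, hAz, hCz]
    nlinarith [hid, hs2, hAz, hCz, hB]
  rw [hsdef] at hs
  rw [hδ]
  field_simp
  nlinarith [hs]
end

section
/- Assume Q is negative semidefinite, k3 ≠ 0, and that the (1,1) entry of P equals η = σ̄·Ct for some σ̄ > 0. Set δ = −(k2−Rt)/k3. Then δ ≠ 0 and the gain k1 satisfies k1 = 1 − Lt/δ − σ̄·Lt/p22. -/
open Matrix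

/-- If `Q = Fᵀ·P + P·F` is negative semidefinite, `k3 ≠ 0` and `η = σ̄·Ct` with
`σ̄ > 0`, then, with `δ = −(k2−Rt)/k3`, one has `δ ≠ 0` and
`k1 = 1 − Lt/δ − σ̄·Lt/p22`. -/
theorem k1_formula
    (Rt Lt Ct : ℝ) (hRt : 0 < Rt) (hLt : 0 < Lt) (hCt : 0 < Ct)
    (k1 k2 k3 : ℝ) (η p22 p23 p33 : ℝ) (hη : 0 < η)
    (F P : Matrix (Fin 3) (Fin 3) ℝ)
    (hF : F = !![0, 1/Ct, 0; (k1 - 1)/Lt, (k2 - Rt)/Lt, k3/Lt; -1, 0, 0])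
    (hP : P = !![η, 0, 0; 0, p22, p23; 0, p23, p33])
    (hPpd : P.PosDef)
    (Q : Matrix (Fin 3) (Fin 3) ℝ) (hQ : Q = Fᵀ * P + P * F)
    (hns : ∀ x : Fin 3 → ℝ, x ⬝ᵥ Q.mulVec x ≤ 0)
    (hk3 : k3 ≠ 0)
    (σ : ℝ) (hσ : 0 < σ) (hησ : η = σ * Ct)
    (δ : ℝ) (hδ : δ = -(k2 - Rt)/k3) :
    δ ≠ 0 ∧ k1 = 1 - Lt/δ - σ * Lt / p22 := by
  have hLt' : Lt ≠ 0 := hLt.ne'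
  have hCt' : Ct ≠ 0 := hCt.ne'
  -- p22 > 0
  have hp22 : (0:ℝ) < p22 := by
    have := hPpd.dotProduct_mulVec_pos (x := ![0,1,0]) (by intro h; have := congrFun h 1; simp at this)
    simpa [hP, Matrix.mulVec, dotProduct, Fin.sum_univ_three] using this
  set a := (k1 - 1)/Lt with ha
  set b := (k2 - Rt)/Lt with hb
  set c := k3/Lt with hc
  set A := η/Ct + p22*a - p23 with hA
  set B := p23*a - p33 with hB
  set C := p22*c + p23*b with hCdef
  have H : ∀ u v w : ℝ,
      2*A*u*v + 2*B*u*w + 2*p22*b*v^2 + 2*C*v*w + 2*p23*c*w^2 ≤ 0 := by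
    intro u v w
    have h := hns ![u,v,w]
    simp [hQ, hF, hP, Matrix.mulVec, dotProduct, Fin.sum_univ_three,
      Matrix.mul_apply, Matrix.vecHead, Matrix.vecTail, Matrix.transpose_apply] at h
    calc 2*A*u*v + 2*B*u*w + 2*p22*b*v^2 + 2*C*v*w + 2*p23*c*w^2
        = u * ((a * p22 + -p23 + η * Ct⁻¹) * v + (a * p23 + -p33) * w) +
          v * ((Ct⁻¹ * η + (p22 * a + -p23)) * u + (b * p22 + p22 * b) * v +
            (b * p23 + p22 * c) * w) +
          w * ((p23 * a + -p33) * u + (c * p22 + p23 * b) * v +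
            (c * p23 + p23 * c) * w) := by
          rw [hA, hB, hCdef]; field_simp; ring
      _ ≤ 0 := h
  have hcne : c ≠ 0 := div_ne_zero hk3 hLt'
  -- A = 0
  have hA0 : A = 0 := by
    by_contra h0
    have key : 2*A*((1 - 2*p22*b)/(2*A)) = 1 - 2*p22*b := by field_simp
    have h1 := H ((1 - 2*p22*b)/(2*A)) 1 0
    nlinarith [h1, key]
  -- k2 ≠ Rt
  have hbne : k2 - Rt ≠ 0 := by
    intro h0
    have hb0 : b = 0 := by rw [hb, h0]; simp
    have hCne : C ≠ 0 := by
      rw [hCdef, hb0]; simpa using mul_ne_zero hp22.ne' hcne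
    have key : 2*C*((1 - 2*p23*c)/(2*C)) = 1 - 2*p23*c := by field_simp
    have h1 := H 0 ((1 - 2*p23*c)/(2*C)) 1
    rw [hb0] at h1
    nlinarith [h1, key]
  have hbne' : b ≠ 0 := div_ne_zero hbne hLt'
  have hble : p22 * b ≤ 0 := by have := H 0 1 0; nlinarith
  have hblt : p22 * b < 0 := lt_of_le_of_ne hble (mul_ne_zero hp22.ne' hbne')
  -- p22 * c = p23 * b
  have hr : p22 * c = p23 * b := by
    have h5 := H 0 (-C) (2*p22*b)
    rw [hCdef] at h5
    have hsq : (p22*c - p23*b)^2 ≤ 0 := by nlinarith [h5, hblt, sq_nonneg C]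
    have := le_antisymm hsq (sq_nonneg _)
    have := pow_eq_zero_iff (n := 2) (by norm_num) |>.mp this
    linarith
  have hδne : δ ≠ 0 := by
    rw [hδ]; exact div_ne_zero (neg_ne_zero.mpr hbne) hk3
  refine ⟨hδne, ?_⟩
  rw [hA, ha] at hA0
  rw [hc, hb] at hr
  rw [hησ] at hA0
  have e1 : σ*Lt + p22*(k1-1) = p23*Lt := by
    field_simp at hA0; linarith
  have e2 : p22*k3 = p23*(k2-Rt) := by
    field_simp at hr; linarith
  have hRk : Rt - k2 ≠ 0 := fun h => hbne (by linarith)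
  rw [hδ]
  field_simp
  linear_combination (k2 - Rt)*e1 - Lt*e2
end

section
/- Assume Q is negative semidefinite, k3 ≠ 0, and that the (1,1) entry of P equals η = σ̄·Ct for some σ̄ > 0. Set δ = −(k2−Rt)/k3. Then (k1 − 1)·δ ≠ −Lt, i.e. δ is never equal to −Lt/(k1 − 1). -/
open Matrix

private lemma zero_of_lin (A B : ℝ) (h : ∀ t : ℝ, 2*t*A + B ≤ 0) : A = 0 := by
  by_contra hA
  have h1 := h ((1 - B)/(2*A))
  have e : 2*((1 - B)/(2*A))*A = 1 - B := by field_simp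
  linarith

/-- If `Q = Fᵀ·P + P·F` is negative semidefinite, `k3 ≠ 0` and `η = σ̄·Ct` with
`σ̄ > 0`, then, with `δ = −(k2−Rt)/k3`, one has `(k1 − 1)·δ ≠ −Lt`, i.e. `δ` never
equals `−Lt/(k1 − 1)`. -/
theorem delta_ne
    (Rt Lt Ct : ℝ) (hRt : 0 < Rt) (hLt : 0 < Lt) (hCt : 0 < Ct)
    (k1 k2 k3 : ℝ) (η p22 p23 p33 : ℝ) (hη : 0 < η)
    (F P : Matrix (Fin 3) (Fin 3) ℝ)
    (hF : F = !![0, 1/Ct, 0; (k1 - 1)/Lt, (k2 - Rt)/Lt, k3/Lt; -1, 0, 0])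
    (hP : P = !![η, 0, 0; 0, p22, p23; 0, p23, p33])
    (hPpd : P.PosDef)
    (Q : Matrix (Fin 3) (Fin 3) ℝ) (hQ : Q = Fᵀ * P + P * F)
    (hns : ∀ x : Fin 3 → ℝ, x ⬝ᵥ Q.mulVec x ≤ 0)
    (hk3 : k3 ≠ 0)
    (σ : ℝ) (hσ : 0 < σ) (hησ : η = σ * Ct)
    (δ : ℝ) (hδ : δ = -(k2 - Rt)/k3) :
    (k1 - 1) * δ ≠ -Lt := by
  intro hcon
  -- scalar form of the quadratic inequality
  have key : ∀ x1 x2 x3 : ℝ,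
      2*x1*x2*((k1-1)/Lt*p22 - p23 + η/Ct) + 2*x1*x3*((k1-1)/Lt*p23 - p33)
      + 2*(k2-Rt)/Lt*p22*x2^2 + 2*(k3/Lt*p22 + (k2-Rt)/Lt*p23)*x2*x3
      + 2*k3/Lt*p23*x3^2 ≤ 0 := by
    intro x1 x2 x3
    have h := hns ![x1, x2, x3]
    simp [hQ, hF, hP, Matrix.mulVec, dotProduct, Fin.sum_univ_three,
      Matrix.mul_apply, Matrix.add_apply, Matrix.transpose_apply,
      Matrix.vecHead, Matrix.vecTail] at h
    have e : 2*x1*x2*((k1-1)/Lt*p22 - p23 + η/Ct) + 2*x1*x3*((k1-1)/Lt*p23 - p33)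
      + 2*(k2-Rt)/Lt*p22*x2^2 + 2*(k3/Lt*p22 + (k2-Rt)/Lt*p23)*x2*x3
      + 2*k3/Lt*p23*x3^2 =
      x1 * (((k1 - 1) / Lt * p22 + -p23 + η * Ct⁻¹) * x2 + ((k1 - 1) / Lt * p23 + -p33) * x3) +
        x2 *
          ((Ct⁻¹ * η + (p22 * ((k1 - 1) / Lt) + -p23)) * x1 + ((k2 - Rt) / Lt * p22 + p22 * ((k2 - Rt) / Lt)) * x2 +
            ((k2 - Rt) / Lt * p23 + p22 * (k3 / Lt)) * x3) +
      x3 *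
        ((p23 * ((k1 - 1) / Lt) + -p33) * x1 + (k3 / Lt * p22 + p23 * ((k2 - Rt) / Lt)) * x2 +
          (k3 / Lt * p23 + p23 * (k3 / Lt)) * x3) := by
      field_simp
      ring
    rw [e]; linarith [h]
  -- basic facts
  have hδ0 : δ ≠ 0 := by
    intro h0; rw [h0, mul_zero] at hcon; linarith
  have hb : k2 - Rt = -δ * k3 := by
    field_simp at hδ; linarith
  have hp22 : 0 < p22 := by
    have hx : (![0,1,0] : Fin 3 → ℝ) ≠ 0 := by
      intro h; have := congrFun h 1; simp at this
    have h := hPpd.dotProduct_mulVec_pos hx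
    simp [hP, Matrix.mulVec, dotProduct, Fin.sum_univ_three] at h
    exact h
  -- Q12 = 0
  have hQ12 : (k1-1)/Lt*p22 - p23 + η/Ct = 0 := by
    apply zero_of_lin _ (2*(k2-Rt)/Lt*p22)
    intro t
    have h := key t 1 0
    nlinarith [h]
  -- δ*(k3/Lt) > 0
  have hδc : 0 < δ * (k3/Lt) := by
    have h := key 0 1 0
    rw [hb] at h
    have hne : δ * (k3/Lt) ≠ 0 := by
      apply mul_ne_zero hδ0 (div_ne_zero hk3 hLt.ne')
    rcases lt_or_gt_of_ne hne with hlt | hgt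
    · exfalso
      have h2 : -2 * (δ * (k3/Lt)) * p22 ≤ 0 := by linear_combination h
      nlinarith [mul_lt_mul_of_pos_left hlt hp22]
    · exact hgt
  -- p22 + δ*p23 = 0
  have hs : p22 + δ*p23 = 0 := by
    have h := key 0 (2*p22 - (p22 + δ*p23)) (2*p22*δ)
    have e : 2*0*(2*p22 - (p22 + δ*p23))*((k1-1)/Lt*p22 - p23 + η/Ct)
        + 2*0*(2*p22*δ)*((k1-1)/Lt*p23 - p33)
        + 2*(k2-Rt)/Lt*p22*(2*p22 - (p22 + δ*p23))^2
        + 2*(k3/Lt*p22 + (k2-Rt)/Lt*p23)*(2*p22 - (p22 + δ*p23))*(2*p22*δ)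
        + 2*k3/Lt*p23*(2*p22*δ)^2
        = 2*(δ*(k3/Lt))*p22*(p22 + δ*p23)^2 := by
      rw [hb]; ring
    rw [e] at h
    have hc : 0 < 2*(δ*(k3/Lt))*p22 := mul_pos (by linarith) hp22
    have hq : (p22+δ*p23)^2 ≤ 0 := by
      by_contra hq
      push_neg at hq
      linarith [mul_pos hc hq]
    exact sq_eq_zero_iff.mp (le_antisymm hq (sq_nonneg _))
  -- final contradiction
  have hσeq : η/Ct = σ := by rw [hησ]; field_simp
  rw [hσeq] at hQ12
  -- multiply hQ12 by δ*Lt and use hcon : (k1-1)*δ = -Lt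
  have : Lt * (σ*δ - (p22 + δ*p23)) = 0 := by
    have e2 : Lt * (σ*δ - (p22 + δ*p23)) =
        δ*Lt*((k1-1)/Lt*p22 - p23 + σ) - ((k1-1)*δ + Lt)*p22 := by
      field_simp; ring
    rw [e2, hQ12, hcon]; ring
  rw [hs] at this
  have : σ * δ = 0 := by
    have := mul_eq_zero.mp this
    rcases this with h | h
    · exact absurd h hLt.ne'
    · linarith
  rcases mul_eq_zero.mp this with h | h
  · exact absurd h hσ.ne'
  · exact absurd h hδ0
end

section
/- Let A be a 3×3 real matrix, B a 3×1 real matrix, Γ = diag(γ1, γ2, γ3) with γ1, γ2, γ3 > 0, Y a 3×3 symmetric positive definite matrix whose (1,1) entry is 1/η for some η > 0 and whose (1,2), (1,3), (2,1), (3,1) entries are zero, and G a 1×3 real matrix. Set K = G·Y⁻¹ and P = Y⁻¹. Then the 6×6 block matrix ![![Y·Aᵀ + Gᵀ·Bᵀ + A·Y + B·G, Y], ![Y, −Γ]] is negative semidefinite if and only if (A + B·K)ᵀ·P + P·(A + B·K) + Γ⁻¹ is negative semidefinite; moreover, in that case P is symmetric positive definite with (1,1) entry η and zero (1,2), (1,3),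 (2,1), (3,1) entries. -/
open Matrix

private lemma bil3l {m : ℕ} (M N : Matrix (Fin m) (Fin m) ℝ) (y z : Fin m → ℝ) :
    (N *ᵥ y) ⬝ᵥ M *ᵥ z = y ⬝ᵥ (Nᵀ * M) *ᵥ z := by
  rw [dotProduct_mulVec, ← vecMul_transpose, vecMul_vecMul, ← dotProduct_mulVec]

/-- The LMI `[Y·Aᵀ + Gᵀ·Bᵀ + A·Y + B·G, Y; Y, −Γ] ≤ 0` holds if and only if the
Riccati-type inequality `(A + B·K)ᵀ·P + P·(A + B·K) + Γ⁻¹ ≤ 0` holds, where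
`K = G·Y⁻¹` and `P = Y⁻¹`; moreover, in that case `P` is symmetric positive
definite with `(1,1)` entry `η` and zero `(1,2)`, `(1,3)`, `(2,1)`, `(3,1)`
entries. -/
theorem lmi_iff_riccati
    (A : Matrix (Fin 3) (Fin 3) ℝ) (B : Matrix (Fin 3) (Fin 1) ℝ)
    (γ : Fin 3 → ℝ) (hγ : ∀ i, 0 < γ i)
    (Γ : Matrix (Fin 3) (Fin 3) ℝ) (hΓ : Γ = Matrix.diagonal γ)
    (η : ℝ) (hη : 0 < η)
    (Y : Matrix (Fin 3) (Fin 3) ℝ) (hYsymm : Y.IsSymm) (hYpd : Y.PosDef)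
    (hY00 : Y 0 0 = 1/η)
    (hY01 : Y 0 1 = 0) (hY02 : Y 0 2 = 0) (hY10 : Y 1 0 = 0) (hY20 : Y 2 0 = 0)
    (G : Matrix (Fin 1) (Fin 3) ℝ)
    (K : Matrix (Fin 1) (Fin 3) ℝ) (hK : K = G * Y⁻¹)
    (P : Matrix (Fin 3) (Fin 3) ℝ) (hP : P = Y⁻¹) :
    ((∀ x : Fin 3 ⊕ Fin 3 → ℝ,
        x ⬝ᵥ (Matrix.fromBlocks (Y * Aᵀ + Gᵀ * Bᵀ + A * Y + B * G) Y Y (-Γ)).mulVec x ≤ 0)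
      ↔ (∀ x : Fin 3 → ℝ,
        x ⬝ᵥ ((A + B * K)ᵀ * P + P * (A + B * K)
              + Matrix.diagonal (fun i => (γ i)⁻¹)).mulVec x ≤ 0)) ∧
    ((∀ x : Fin 3 ⊕ Fin 3 → ℝ,
        x ⬝ᵥ (Matrix.fromBlocks (Y * Aᵀ + Gᵀ * Bᵀ + A * Y + B * G) Y Y (-Γ)).mulVec x ≤ 0) →
      P.IsSymm ∧ P.PosDef ∧ P 0 0 = η ∧
      P 0 1 = 0 ∧ P 0 2 = 0 ∧ P 1 0 = 0 ∧ P 2 0 = 0) := by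
  have hγne : ∀ i, γ i ≠ 0 := fun i => (hγ i).ne'
  have hdetne : Y.det ≠ 0 := hYpd.det_pos.ne'
  have hYdet : IsUnit Y.det := isUnit_iff_ne_zero.mpr hdetne
  have hPY : P * Y = 1 := by rw [hP]; exact nonsing_inv_mul Y hYdet
  have hYP : Y * P = 1 := by rw [hP]; exact mul_nonsing_inv Y hYdet
  have hPsymm : P.IsSymm := by
    rw [Matrix.IsSymm, hP, transpose_nonsing_inv, hYsymm.eq]
  have hPpd : P.PosDef := hP ▸ hYpd.inv
  set D : Matrix (Fin 3) (Fin 3) ℝ := Matrix.diagonal (fun i => (γ i)⁻¹) with hD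
  set L : Matrix (Fin 3) (Fin 3) ℝ := A + B * K with hL
  have hDsymm : Dᵀ = D := by rw [hD, diagonal_transpose]
  have hDΓ : D * Γ = 1 := by
    rw [hD, hΓ, diagonal_mul_diagonal,
      show (fun i => (γ i)⁻¹ * γ i) = fun _ => (1 : ℝ) from
        funext fun i => inv_mul_cancel₀ (hγne i), diagonal_one]
  have hΓD : Γ * D = 1 := by
    rw [hD, hΓ, diagonal_mul_diagonal,
      show (fun i => γ i * (γ i)⁻¹) = fun _ => (1 : ℝ) from
        funext fun i => mul_inv_cancel₀ (hγne i), diagonal_one]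
  have hG : K * Y = G := by rw [hK, Matrix.mul_assoc, nonsing_inv_mul Y hYdet, Matrix.mul_one]
  have hblock : Y * Aᵀ + Gᵀ * Bᵀ + A * Y + B * G = Y * Lᵀ + L * Y := by
    simp only [hL, ← hG, transpose_add, transpose_mul, mul_add, add_mul, hYsymm.eq,
      ← Matrix.mul_assoc]
    abel
  have m1a : P * Y * Lᵀ * P = Lᵀ * P := by rw [hPY, one_mul]
  have m1b : P * L * Y * P = P * L := by rw [mul_assoc (P * L), hYP, mul_one]
  have m2 : P * Y * D = D := by rw [hPY, one_mul]
  have m3 : D * Y * P = D := by rw [mul_assoc, hYP, mul_one]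
  have m4 : D * Γ * D = D := by rw [hDΓ, one_mul]
  have n1a : Y * Lᵀ * P * Y = Y * Lᵀ := by rw [mul_assoc (Y * Lᵀ), hPY, mul_one]
  have n1b : Y * P * L * Y = L * Y := by rw [hYP, one_mul]
  have n3 : Y * D * Γ = Y := by rw [mul_assoc, hDΓ, mul_one]
  have n4 : Γ * D * Y = Y := by rw [hΓD, one_mul]
  have hΓpos : ∀ w : Fin 3 → ℝ, 0 ≤ w ⬝ᵥ Γ *ᵥ w := by
    intro w
    rw [hΓ]
    simp only [dotProduct, mulVec_diagonal]
    apply Finset.sum_nonneg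
    intro i _
    have : w i * (γ i * w i) = γ i * (w i) ^ 2 := by ring
    rw [this]
    exact mul_nonneg (hγ i).le (sq_nonneg _)
  rw [hblock]
  have hPent : ∀ i j, P i j = (Y.det)⁻¹ * Y.adjugate i j := by
    intro i j
    rw [hP, inv_def, ← Ring.inverse_eq_inv]
    rfl
  constructor
  · constructor
    · intro h z
      have hEq : Sum.elim (P *ᵥ z) (D *ᵥ z) ⬝ᵥ
          (fromBlocks (Y * Lᵀ + L * Y) Y Y (-Γ)) *ᵥ Sum.elim (P *ᵥ z) (D *ᵥ z)
          = z ⬝ᵥ (Lᵀ * P + P * L + D) *ᵥ z := by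
        rw [fromBlocks_mulVec, sumElim_dotProduct_sumElim]
        simp only [Sum.elim_comp_inl, Sum.elim_comp_inr, neg_mulVec, dotProduct_neg,
          add_mulVec, dotProduct_add, mulVec_mulVec, bil3l, transpose_mul, mul_add, add_mul, neg_mul, mul_neg,
          hPsymm.eq, hDsymm, ← mul_assoc, m1a, m1b, m2, m3, m4]
        ring
      rw [← hEq]
      exact h _
    · intro h x
      rw [← Sum.elim_comp_inl_inr x]
      set u : Fin 3 → ℝ := x ∘ Sum.inl
      set v : Fin 3 → ℝ := x ∘ Sum.inr
      have hEq : Sum.elim u v ⬝ᵥ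
          (fromBlocks (Y * Lᵀ + L * Y) Y Y (-Γ)) *ᵥ Sum.elim u v
          = (Y *ᵥ u) ⬝ᵥ (Lᵀ * P + P * L + D) *ᵥ (Y *ᵥ u)
            - ((D * Y) *ᵥ u - v) ⬝ᵥ Γ *ᵥ ((D * Y) *ᵥ u - v) := by
        rw [fromBlocks_mulVec, sumElim_dotProduct_sumElim]
        simp only [Sum.elim_comp_inl, Sum.elim_comp_inr, neg_mulVec, dotProduct_neg,
          add_mulVec, dotProduct_add, mulVec_sub, dotProduct_sub, sub_dotProduct,
          mulVec_mulVec, bil3l, transpose_mul, mul_add, add_mul, neg_mul, mul_neg,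
          hPsymm.eq, hDsymm, hYsymm.eq, ← mul_assoc, n1a, n1b, n3, n4]
        ring
      rw [hEq]
      have h1 := h (Y *ᵥ u)
      have h2 := hΓpos ((D * Y) *ᵥ u - v)
      linarith
  · intro _
    have hdet3 : Y.det = η⁻¹ * (Y 1 1 * Y 2 2 - Y 1 2 * Y 2 1) := by
      rw [det_fin_three, hY00, hY01, hY02, hY10, hY20]
      ring
    have hc : Y 1 1 * Y 2 2 - Y 1 2 * Y 2 1 ≠ 0 := by
      intro h0
      exact hdetne (by rw [hdet3, h0, mul_zero])
    have ha00 : Y.adjugate 0 0 = Y 1 1 * Y 2 2 - Y 1 2 * Y 2 1 := by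
      rw [adjugate_fin_three]; simp
    have ha01 : Y.adjugate 0 1 = -(Y 0 1 * Y 2 2) + Y 0 2 * Y 2 1 := by
      rw [adjugate_fin_three]; simp
    have ha02 : Y.adjugate 0 2 = Y 0 1 * Y 1 2 - Y 0 2 * Y 1 1 := by
      rw [adjugate_fin_three]; simp
    have ha10 : Y.adjugate 1 0 = -(Y 1 0 * Y 2 2) + Y 1 2 * Y 2 0 := by
      rw [adjugate_fin_three]; simp
    have ha20 : Y.adjugate 2 0 = Y 1 0 * Y 2 1 - Y 1 1 * Y 2 0 := by
      rw [adjugate_fin_three]; simp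
    refine ⟨hPsymm, hPpd, ?_, ?_, ?_, ?_, ?_⟩
    · rw [hPent, ha00, hdet3]
      field_simp
    · rw [hPent, ha01, hY01, hY02]; ring
    · rw [hPent, ha02, hY01, hY02]; ring
    · rw [hPent, ha10, hY10, hY20]; ring
    · rw [hPent, ha20, hY10, hY20]; ring
end

section
/- Let G be a 1×3 real matrix, Y a 3×3 symmetric positive definite real matrix, and β > 0, ζ > 0 real numbers. If the 4×4 block matrix ![![−β·I₃, Gᵀ], ![G, −1]] is negative definite and the 6×6 block matrix ![![Y, I₃], ![I₃, ζ·I₃]] is positive definite, then the ℓ²-operator norm of K = G·Y⁻¹ satisfies ‖K‖₂ < √β · ζ. -/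
open Matrix

/-- If `[−β·I₃, Gᵀ; G, −1] < 0` and `[Y, I₃; I₃, ζ·I₃] > 0` with `β, ζ > 0` and
`Y` symmetric positive definite, then the ℓ²-operator norm of `K = G·Y⁻¹`
satisfies `‖K‖₂ < √β · ζ`. -/
theorem K_norm_bound
    (G : Matrix (Fin 1) (Fin 3) ℝ)
    (Y : Matrix (Fin 3) (Fin 3) ℝ) (hYsymm : Y.IsSymm) (hYpd : Y.PosDef)
    (β ζ : ℝ) (hβ : 0 < β) (hζ : 0 < ζ)
    (h1 : ∀ x : Fin 3 ⊕ Fin 1 → ℝ, x ≠ 0 →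
      x ⬝ᵥ (Matrix.fromBlocks (-(β • (1 : Matrix (Fin 3) (Fin 3) ℝ))) Gᵀ G
              (-(1 : Matrix (Fin 1) (Fin 1) ℝ))).mulVec x < 0)
    (h2 : ∀ x : Fin 3 ⊕ Fin 3 → ℝ, x ≠ 0 →
      0 < x ⬝ᵥ (Matrix.fromBlocks Y (1 : Matrix (Fin 3) (Fin 3) ℝ)
              (1 : Matrix (Fin 3) (Fin 3) ℝ)
              (ζ • (1 : Matrix (Fin 3) (Fin 3) ℝ))).mulVec x) :
    ‖LinearMap.toContinuousLinearMap (Matrix.toEuclideanLin (G * Y⁻¹))‖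
      < Real.sqrt β * ζ := by
  have hYdet : IsUnit Y.det := (isUnit_iff_isUnit_det _).mp hYpd.isUnit
  have hYinv : Y * Y⁻¹ = 1 := Matrix.mul_nonsing_inv _ hYdet
  set M := Y⁻¹ with hMdef
  have hMsymm : Mᵀ = M := by
    rw [hMdef, Matrix.transpose_nonsing_inv, hYsymm.eq]
  have hMpd : M.PosDef := hYpd.inv
  -- symmetry of the bilinear form of M
  have hsym : ∀ a b : Fin 3 → ℝ, a ⬝ᵥ (M *ᵥ b) = b ⬝ᵥ (M *ᵥ a) := by
    intro a b
    rw [dotProduct_mulVec, ← hMsymm, vecMul_transpose, dotProduct_comm, hMsymm]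
  have hQnn : ∀ w : Fin 3 → ℝ, 0 ≤ w ⬝ᵥ (M *ᵥ w) := by
    intro w
    simpa using hMpd.posSemidef.dotProduct_mulVec_nonneg w
  have hdnn : ∀ w : Fin 3 → ℝ, 0 ≤ w ⬝ᵥ w := by
    intro w
    exact Finset.sum_nonneg fun i _ => mul_self_nonneg _
  -- Step A : strict bound ‖G v‖² < β ‖v‖²
  have hA : ∀ v : Fin 3 → ℝ, v ≠ 0 →
      (G *ᵥ v) ⬝ᵥ (G *ᵥ v) < β * (v ⬝ᵥ v) := by
    intro v hv
    set t := G *ᵥ v with ht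
    have hx : Sum.elim v t ≠ 0 := by
      intro h
      exact hv (funext fun i => by simpa using congrFun h (Sum.inl i))
    have hkey : v ⬝ᵥ (Gᵀ *ᵥ t) = t ⬝ᵥ t := by
      rw [dotProduct_mulVec, vecMul_transpose]
    have h := h1 _ hx
    rw [fromBlocks_mulVec, sumElim_dotProduct_sumElim] at h
    simp only [neg_mulVec, smul_mulVec, one_mulVec, dotProduct_add,
      dotProduct_neg, dotProduct_smul, smul_eq_mul, Sum.elim_comp_inl, Sum.elim_comp_inr, hkey, ← ht] at h
    linarith
  -- Step B : w ⬝ᵥ M w ≤ ζ ‖w‖²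
  have hB : ∀ w : Fin 3 → ℝ, w ⬝ᵥ (M *ᵥ w) ≤ ζ * (w ⬝ᵥ w) := by
    intro w
    rcases eq_or_ne w 0 with rfl | hw
    · simp
    have hx : Sum.elim (-(M *ᵥ w)) w ≠ 0 := by
      intro h
      exact hw (funext fun i => by simpa using congrFun h (Sum.inr i))
    have h := h2 _ hx
    rw [fromBlocks_mulVec, sumElim_dotProduct_sumElim] at h
    have hY1 : Y *ᵥ (-(M *ᵥ w)) = -w := by
      rw [mulVec_neg, mulVec_mulVec, hMdef, hYinv, one_mulVec]
    simp only [hY1, one_mulVec, smul_mulVec, dotProduct_add,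
      dotProduct_neg, neg_dotProduct, dotProduct_smul, smul_eq_mul,
      Sum.elim_comp_inl, Sum.elim_comp_inr,
      neg_add_cancel, dotProduct_zero, neg_neg] at h
    linarith
  -- Cauchy-Schwarz for the PSD form of M
  have hCS : ∀ a b : Fin 3 → ℝ,
      (a ⬝ᵥ (M *ᵥ b)) ^ 2 ≤ (a ⬝ᵥ (M *ᵥ a)) * (b ⬝ᵥ (M *ᵥ b)) := by
    intro a b
    have hquad : ∀ x : ℝ,
        0 ≤ (b ⬝ᵥ (M *ᵥ b)) * (x * x) + (2 * (a ⬝ᵥ (M *ᵥ b))) * x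
            + (a ⬝ᵥ (M *ᵥ a)) := by
      intro x
      have e := hQnn (a + x • b)
      simp only [mulVec_add, mulVec_smul, dotProduct_add, add_dotProduct,
        smul_dotProduct, dotProduct_smul, smul_eq_mul] at e
      rw [hsym b a] at e
      nlinarith [e]
    have hd := discrim_le_zero hquad
    rw [discrim] at hd
    nlinarith [hd]
  -- Step B' : ‖M w‖² ≤ ζ² ‖w‖²
  have hM2 : ∀ w : Fin 3 → ℝ,
      (M *ᵥ w) ⬝ᵥ (M *ᵥ w) ≤ ζ ^ 2 * (w ⬝ᵥ w) := by
    intro w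
    have h1' : (M *ᵥ w) ⬝ᵥ (M *ᵥ w) = w ⬝ᵥ (M *ᵥ (M *ᵥ w)) := hsym (M *ᵥ w) w
    have hBw := hB w
    have hBu := hB (M *ᵥ w)
    have hQu := hQnn (M *ᵥ w)
    have hdw := hdnn w
    have hdu := hdnn (M *ᵥ w)
    have key : ((M *ᵥ w) ⬝ᵥ (M *ᵥ w)) ^ 2
        ≤ (ζ * (w ⬝ᵥ w)) * (ζ * ((M *ᵥ w) ⬝ᵥ (M *ᵥ w))) := by
      calc ((M *ᵥ w) ⬝ᵥ (M *ᵥ w)) ^ 2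
          = (w ⬝ᵥ (M *ᵥ (M *ᵥ w))) ^ 2 := by rw [h1']
        _ ≤ (w ⬝ᵥ (M *ᵥ w)) * ((M *ᵥ w) ⬝ᵥ (M *ᵥ (M *ᵥ w))) := hCS w (M *ᵥ w)
        _ ≤ (ζ * (w ⬝ᵥ w)) * (ζ * ((M *ᵥ w) ⬝ᵥ (M *ᵥ w))) :=
            mul_le_mul hBw hBu hQu (by positivity)
    rcases eq_or_lt_of_le hdu with h0 | h0
    · rw [← h0]; positivity
    · have hmul : ((M *ᵥ w) ⬝ᵥ (M *ᵥ w)) * ((M *ᵥ w) ⬝ᵥ (M *ᵥ w))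
          ≤ (ζ ^ 2 * (w ⬝ᵥ w)) * ((M *ᵥ w) ⬝ᵥ (M *ᵥ w)) := by nlinarith [key]
      exact le_of_mul_le_mul_right hmul h0
  -- norms on EuclideanSpace as dot products
  have hnorm : ∀ (k : ℕ) (x : EuclideanSpace ℝ (Fin k)),
      ‖x‖ ^ 2 = (fun i => x i) ⬝ᵥ (fun i => x i) := by
    intro k x
    rw [EuclideanSpace.norm_eq, Real.sq_sqrt (by positivity)]
    simp [dotProduct, Real.norm_eq_abs, sq_abs, pow_two]
  set f := LinearMap.toContinuousLinearMap (Matrix.toEuclideanLin (G * Y⁻¹)) with hf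
  -- pointwise strict bound
  have hpt : ∀ v : EuclideanSpace ℝ (Fin 3), v ≠ 0 →
      ‖f v‖ < (Real.sqrt β * ζ) * ‖v‖ := by
    intro v hv
    set v' : Fin 3 → ℝ := fun i => v i with hv'
    have hv'0 : v' ≠ 0 := by
      intro h
      exact hv (PiLp.ext fun i => by simpa using congrFun h i)
    have hu0 : M *ᵥ v' ≠ 0 := by
      intro h
      apply hv'0
      have h2' := congrArg (fun z => Y *ᵥ z) h
      simpa [mulVec_mulVec, hMdef, Matrix.mul_nonsing_inv _ hYdet, one_mulVec] using h2'
    have hfv : (fun i => f v i) = G *ᵥ (M *ᵥ v') := by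
      funext i
      show ((G * Y⁻¹) *ᵥ v') i = _
      rw [← mulVec_mulVec, hMdef]
    have hsq : ‖f v‖ ^ 2 = (G *ᵥ (M *ᵥ v')) ⬝ᵥ (G *ᵥ (M *ᵥ v')) := by
      rw [hnorm, hfv]
    have hvn : ‖v‖ ^ 2 = v' ⬝ᵥ v' := hnorm 3 v
    have hlt : ‖f v‖ ^ 2 < ((Real.sqrt β * ζ) * ‖v‖) ^ 2 := by
      have step1 := hA (M *ᵥ v') hu0
      have step2 := hM2 v'
      have : (G *ᵥ (M *ᵥ v')) ⬝ᵥ (G *ᵥ (M *ᵥ v')) < β * (ζ ^ 2 * (v' ⬝ᵥ v')) := by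
        nlinarith [step1, step2, hβ]
      rw [hsq]
      calc (G *ᵥ (M *ᵥ v')) ⬝ᵥ (G *ᵥ (M *ᵥ v'))
          < β * (ζ ^ 2 * (v' ⬝ᵥ v')) := this
        _ = ((Real.sqrt β * ζ) * ‖v‖) ^ 2 := by
            rw [mul_pow, mul_pow, Real.sq_sqrt hβ.le, hvn]; ring
    exact lt_of_pow_lt_pow_left₀ 2 (by positivity) hlt
  -- conclude via compactness of the unit sphere
  have hsne : (Metric.sphere (0 : EuclideanSpace ℝ (Fin 3)) 1).Nonempty :=
    NormedSpace.sphere_nonempty.mpr zero_le_one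
  obtain ⟨v₀, hv₀mem, hmax⟩ :=
    (isCompact_sphere (0 : EuclideanSpace ℝ (Fin 3)) 1).exists_isMaxOn hsne
      (f.continuous.norm.continuousOn)
  have hv₀n : ‖v₀‖ = 1 := mem_sphere_zero_iff_norm.mp hv₀mem
  have hv₀0 : v₀ ≠ 0 := by
    intro h
    rw [h, norm_zero] at hv₀n
    norm_num at hv₀n
  have hb : ‖f‖ ≤ ‖f v₀‖ := by
    apply f.opNorm_le_bound (norm_nonneg _)
    intro x
    rcases eq_or_ne x 0 with rfl | hx
    · simp
    · have hxn : ‖x‖ ≠ 0 := norm_ne_zero_iff.mpr hx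
      have hxs : ‖x‖⁻¹ • x ∈ Metric.sphere (0 : EuclideanSpace ℝ (Fin 3)) 1 := by
        rw [mem_sphere_zero_iff_norm, norm_smul, norm_inv, norm_norm,
          inv_mul_cancel₀ hxn]
      have h : ‖f (‖x‖⁻¹ • x)‖ ≤ ‖f v₀‖ := hmax hxs
      rw [_root_.map_smul, norm_smul, norm_inv, norm_norm] at h
      have hxnn : (0:ℝ) < ‖x‖ := (norm_nonneg x).lt_of_ne' hxn
      calc ‖f x‖ = (‖x‖⁻¹ * ‖f x‖) * ‖x‖ := by field_simp
        _ ≤ ‖f v₀‖ * ‖x‖ := by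
            exact mul_le_mul_of_nonneg_right h (norm_nonneg x)
  calc ‖f‖ ≤ ‖f v₀‖ := hb
    _ < (Real.sqrt β * ζ) * ‖v₀‖ := hpt v₀ hv₀0
    _ = Real.sqrt β * ζ := by rw [hv₀n, mul_one]
end

section
/- Fix positive reals Rt, Lt, Ct, and define the 3×3 real matrix Â = ![![0, 1/Ct, 0], ![−1/Lt, −Rt/Lt, 0], ![−1, 0, 0]] and the column vector B̂ = (0, 1/Lt, 0)ᵀ. Then the pair (Â, B̂) is controllable: the Kalman controllability matrix [B̂ | Â·B̂ | Â²·B̂], i.e. the 3×3 matrix with columns B̂, Â·B̂ and Â²·B̂, is invertible. -/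
open Matrix

/-- The augmented DGU pair `(Â, B̂)` is controllable: the Kalman controllability
matrix `[B̂ | Â·B̂ | Â²·B̂]` is invertible. -/
theorem augmented_pair_controllable
    (Rt Lt Ct : ℝ) (hRt : 0 < Rt) (hLt : 0 < Lt) (hCt : 0 < Ct)
    (A : Matrix (Fin 3) (Fin 3) ℝ)
    (hA : A = !![0, 1/Ct, 0; -1/Lt, -Rt/Lt, 0; -1, 0, 0])
    (B : Matrix (Fin 3) (Fin 1) ℝ)
    (hB : B = !![0; 1/Lt; 0]) :
    IsUnit (Matrix.of (fun i j : Fin 3 => ((A ^ (j : ℕ)) * B) i 0)) := by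
  refine (Matrix.isUnit_iff_isUnit_det _).2 (isUnit_iff_ne_zero.2 ?_)
  have hC := hCt.ne'
  have hL := hLt.ne'
  subst hA hB
  norm_num [Matrix.det_fin_three, Matrix.mul_apply, Fin.sum_univ_three, pow_succ, Matrix.one_apply, Matrix.cons_val_two, Matrix.tail_cons, Matrix.head_cons, Fin.ext_iff]
  exact ⟨hC, hL⟩
end
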